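/- Every tree admits a 3-track layout. -/

import Mathlib

namespace Stmt11Aux

/-- base-`n` encoding of a digit list -/
def enc (n : ℕ) : List ℕ → ℕ
  | [] => 0
  | a :: l => a * n ^ l.length + enc n l

lemma enc_lt {n : ℕ} : ∀ {l : List ℕ}, (∀ a ∈ l, a < n) → enc n l < n ^ l.length := by
  intro l
  induction l with
  | nil => intro _; simp [enc]
  | cons a l ih =>
    intro h
    have ha : a < n := h a (by simp)
    have hl : enc n l < n ^ l.length := ih (fun x hx => h x (by simp [hx]))
    have h1 : a * n ^ l.length + enc n l < (a + 1) * n ^ l.length := by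
      have := hl; nlinarith
    have h2 : (a + 1) * n ^ l.length ≤ n * n ^ l.length :=
      Nat.mul_le_mul_right _ ha
    have h3 : n * n ^ l.length = n ^ (a :: l).length := by
      rw [List.length_cons, pow_succ]; ring
    calc enc n (a :: l) = a * n ^ l.length + enc n l := rfl
      _ < (a + 1) * n ^ l.length := h1
      _ ≤ n * n ^ l.length := h2
      _ = n ^ (a :: l).length := h3

lemma enc_lt_enc {n : ℕ} : ∀ {l m : List ℕ}, (∀ a ∈ l, a < n) → (∀ a ∈ m, a < n) →
    l.length = m.length → List.Lex (· < ·) l m → enc n l < enc n m := by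
  intro l
  induction l with
  | nil =>
    intro m _ _ hlen hlex
    cases hlex with
    | nil => simp at hlen
  | cons a l ih =>
    intro m hl hm hlen hlex
    cases m with
    | nil => simp at hlen
    | cons b m =>
      have hlen' : l.length = m.length := by simpa using hlen
      cases hlex with
      | rel hab =>
        have h1 : enc n l < n ^ l.length := enc_lt (fun x hx => hl x (by simp [hx]))
        have h2 : (a + 1) * n ^ l.length ≤ b * n ^ l.length :=
          Nat.mul_le_mul_right _ hab
        have h3 : n ^ l.length = n ^ m.length := by rw [hlen']
        calc enc n (a :: l) = a * n ^ l.length + enc n l := rfl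
          _ < (a + 1) * n ^ l.length := by nlinarith
          _ ≤ b * n ^ l.length := h2
          _ = b * n ^ m.length := by rw [h3]
          _ ≤ b * n ^ m.length + enc n m := Nat.le_add_right _ _
          _ = enc n (b :: m) := rfl
      | cons htail =>
        have h4 : enc n l < enc n m :=
          ih (fun x hx => hl x (by simp [hx])) (fun x hx => hm x (by simp [hx])) hlen' htail
        have h3 : n ^ l.length = n ^ m.length := by rw [hlen']
        calc enc n (a :: l) = a * n ^ l.length + enc n l := rfl
          _ < a * n ^ m.length + enc n m := by rw [h3] at *; omega
          _ = enc n (a :: m) := rfl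

lemma lex_of_enc_lt {n : ℕ} {l m : List ℕ} (hl : ∀ a ∈ l, a < n) (hm : ∀ a ∈ m, a < n)
    (hlen : l.length = m.length) (h : enc n l < enc n m) : List.Lex (· < ·) l m := by
  rcases @trichotomous _ (List.Lex (· < ·)) (List.Lex.trichotomous _) l m with h1 | h1 | h1
  · exact h1
  · subst h1; omega
  · exact absurd (enc_lt_enc hm hl hlen.symm h1) (by omega)

lemma lex_concat {x y : ℕ} : ∀ {l m : List ℕ}, l.length = m.length →
    List.Lex (· < ·) (l ++ [x]) (m ++ [y]) → l = m ∨ List.Lex (· < ·) l m := by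
  intro l
  induction l with
  | nil =>
    intro m hlen _
    left
    have : m = [] := List.length_eq_zero_iff.mp hlen.symm
    rw [this]
  | cons a l ih =>
    intro m hlen hlex
    cases m with
    | nil => simp at hlen
    | cons b m =>
      have hlen' : l.length = m.length := by simpa using hlen
      rw [List.cons_append, List.cons_append] at hlex
      cases hlex with
      | rel hab => exact Or.inr (List.Lex.rel hab)
      | cons htail =>
        rcases ih hlen' htail with h | h
        · exact Or.inl (by rw [h])
        · exact Or.inr (List.Lex.cons h)

end Stmt11Aux

/-- Every tree admits a 3-track layout: a partition of the vertices into three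
independent tracks, each linearly ordered (via `f`), such that between every
pair of tracks no two edges X-cross. -/
theorem stmt11 {V : Type*} [Fintype V] (G : SimpleGraph V) (hT : G.IsTree) :
    ∃ (t : V → Fin 3) (f : V → ℕ), Function.Injective f ∧
      (∀ u v, G.Adj u v → t u ≠ t v) ∧
      (∀ a b a' b' : V, G.Adj a b → G.Adj a' b' → t a = t a' → t b = t b' →
        ¬ (f a < f a' ∧ f b' < f b)) := by
  classical
  open Stmt11Aux in
  obtain ⟨r⟩ := hT.isConnected.nonempty
  haveI : Nonempty V := ⟨r⟩
  have hEU := hT.existsUnique_path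
  have hex : ∀ v : V, ∃ q : G.Walk r v, q.IsPath ∧ ∀ q' : G.Walk r v, q'.IsPath → q' = q := by
    intro v
    obtain ⟨q, hq, hq'⟩ := hEU r v
    exact ⟨q, hq, hq'⟩
  choose p hp hup using hex
  -- key structural lemma
  have key : ∀ u v (h : G.Adj u v), p v = (p u).concat h ∨ p u = (p v).concat h.symm := by
    intro u v h
    by_cases hv : v ∈ (p u).support
    · right
      have e1 : (p u).takeUntil v hv = p v := hup v _ ((hp u).takeUntil hv)
      have e2 : (p u).dropUntil v hv = SimpleGraph.Walk.cons h.symm SimpleGraph.Walk.nil := by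
        obtain ⟨q, hq, huq⟩ := hEU v u
        rw [huq _ ((hp u).dropUntil hv),
          huq (SimpleGraph.Walk.cons h.symm SimpleGraph.Walk.nil)
            (by simp [SimpleGraph.Walk.cons_isPath_iff, h.ne'])]
      have hts := (p u).take_spec hv
      rw [e1, e2] at hts
      rw [SimpleGraph.Walk.concat_eq_append]
      exact hts.symm
    · left
      have hpath : ((p u).concat h).IsPath := by
        rw [SimpleGraph.Walk.isPath_def, SimpleGraph.Walk.support_concat,
          List.nodup_append']
        refine ⟨(hp u).support_nodup, by simp, by simpa using fun hx => hv hx⟩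
      exact (hup v _ hpath).symm
  set n := Fintype.card V with hn
  have hn1 : 1 ≤ n := Fintype.card_pos
  set g : V → ℕ := fun x => ((Fintype.equivFin V) x : ℕ) with hg
  have hginj : Function.Injective g := fun x y hxy => by
    apply (Fintype.equivFin V).injective
    exact Fin.ext hxy
  set d : V → ℕ := fun v => (p v).length with hd
  set digits : V → List ℕ := fun v => (p v).support.map g with hdig
  have hdiglen : ∀ v, (digits v).length = d v + 1 := by
    intro v; simp [hdig, hd, SimpleGraph.Walk.length_support]
  have hdigbound : ∀ v, ∀ a ∈ digits v, a < n := by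
    intro v a ha
    simp only [hdig, List.mem_map] at ha
    obtain ⟨x, _, rfl⟩ := ha
    exact ((Fintype.equivFin V) x).isLt
  have hdlt : ∀ v, d v + 1 ≤ n := by
    intro v
    have := ((hp v).support_nodup).length_le_card
    rwa [SimpleGraph.Walk.length_support] at this
  set code : V → ℕ := fun v => Stmt11Aux.enc n (digits v) with hcode
  have hcodelt : ∀ v, code v < n ^ n := by
    intro v
    calc code v < n ^ (digits v).length := Stmt11Aux.enc_lt (hdigbound v)
      _ = n ^ (d v + 1) := by rw [hdiglen v]
      _ ≤ n ^ n := Nat.pow_le_pow_right hn1 (hdlt v)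
  set f : V → ℕ := fun v => d v * n ^ n + code v with hf
  have hmono : ∀ u v, d u < d v → f u < f v := by
    intro u v huv
    have h1 : code u < n ^ n := hcodelt u
    calc f u = d u * n ^ n + code u := rfl
      _ < (d u + 1) * n ^ n := by nlinarith
      _ ≤ d v * n ^ n := Nat.mul_le_mul_right _ huv
      _ ≤ f v := Nat.le_add_right _ _
  have hfd : ∀ u v, f u = f v → d u = d v ∧ code u = code v := by
    intro u v huv
    have hdu : d u = d v := by
      by_contra hne
      rcases Nat.lt_or_ge (d u) (d v) with h | h
      · exact absurd huv (Nat.ne_of_lt (hmono u v h))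
      · have : d v < d u := by omega
        exact absurd huv.symm (Nat.ne_of_lt (hmono v u this))
    refine ⟨hdu, ?_⟩
    have : d u * n ^ n + code u = d v * n ^ n + code v := huv
    rw [hdu] at this; omega
  have hdigeq : ∀ u v, digits u = digits v → u = v := by
    intro u v huv
    have hsup : (p u).support = (p v).support := List.map_injective_iff.mpr hginj huv
    have h1 : (p u).support.getLast? = some u := by
      rw [List.getLast?_eq_getLast_of_ne_nil ((p u).support_ne_nil)]
      exact congrArg some ((p u).getLast_support)
    have h2 : (p v).support.getLast? = some v := by
      rw [List.getLast?_eq_getLast_of_ne_nil ((p v).support_ne_nil)]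
      exact congrArg some ((p v).getLast_support)
    rw [hsup, h2] at h1
    exact (Option.some_injective _ h1.symm)
  have hfinj : Function.Injective f := by
    intro u v huv
    obtain ⟨hd1, hc1⟩ := hfd u v huv
    by_contra hne
    have hlen : (digits u).length = (digits v).length := by rw [hdiglen, hdiglen, hd1]
    have hdne : digits u ≠ digits v := fun h => hne (hdigeq u v h)
    rcases @trichotomous _ (List.Lex (· < ·)) (List.Lex.trichotomous _) (digits u) (digits v) with h | h | h
    · exact absurd hc1 (Nat.ne_of_lt (Stmt11Aux.enc_lt_enc (hdigbound u) (hdigbound v) hlen h))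
    · exact hdne h
    · exact absurd hc1.symm
        (Nat.ne_of_lt (Stmt11Aux.enc_lt_enc (hdigbound v) (hdigbound u) hlen.symm h))
  have hadj_d : ∀ u v, G.Adj u v → d v = d u + 1 ∨ d u = d v + 1 := by
    intro u v h
    rcases key u v h with hk | hk
    · left; rw [hd]; simp only [hk, SimpleGraph.Walk.length_concat]
    · right; rw [hd]; simp only [hk, SimpleGraph.Walk.length_concat]
  refine ⟨fun v => ⟨d v % 3, Nat.mod_lt _ (by norm_num)⟩, f, hfinj, ?_, ?_⟩
  · intro u v huv
    have := hadj_d u v huv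
    intro hteq
    have h3 : d u % 3 = d v % 3 := by
      have := Fin.mk.injEq (d u % 3) _ (d v % 3) _ ▸ hteq
      exact Fin.mk.inj_iff.mp hteq
    omega
  · intro a b a' b' hab ha'b' hta htb ⟨hfa, hfb⟩
    have hta3 : d a % 3 = d a' % 3 := Fin.mk.inj_iff.mp hta
    have htb3 : d b % 3 = d b' % 3 := Fin.mk.inj_iff.mp htb
    have hdab := hadj_d a b hab
    have hdab' := hadj_d a' b' ha'b'
    have hle1 : d a ≤ d a' := by
      by_contra hlt
      have := hmono a' a (by omega)
      omega
    have hle2 : d b' ≤ d b := by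
      by_contra hlt
      have := hmono b b' (by omega)
      omega
    have heqd : d a = d a' ∧ d b = d b' := by
      constructor <;> omega
    obtain ⟨heqa, heqb⟩ := heqd
    have hcodea : code a < code a' := by
      have h1 : f a = d a * n ^ n + code a := rfl
      have h2 : f a' = d a' * n ^ n + code a' := rfl
      rw [h1, h2, heqa] at hfa; omega
    have hcodeb : code b' < code b := by
      have h1 : f b = d b * n ^ n + code b := rfl
      have h2 : f b' = d b' * n ^ n + code b' := rfl
      rw [h1, h2, heqb] at hfb; omega
    have hdigconcat : ∀ u v (h : G.Adj u v), p v = (p u).concat h →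
        digits v = digits u ++ [g v] := by
      intro u v h hk
      simp only [hdig, hk, SimpleGraph.Walk.support_concat, List.concat_eq_append,
        List.map_append, List.map_cons, List.map_nil]
    rcases key a b hab with hk | hk <;> rcases key a' b' ha'b' with hk' | hk'
    · -- b, b' are children of a, a'
      have e1 : digits b = digits a ++ [g b] := hdigconcat a b hab hk
      have e2 : digits b' = digits a' ++ [g b'] := hdigconcat a' b' ha'b' hk'
      have hlenb : (digits b').length = (digits b).length := by
        rw [hdiglen, hdiglen, heqb]
      have hlex : List.Lex (· < ·) (digits b') (digits b) :=
        Stmt11Aux.lex_of_enc_lt (hdigbound b') (hdigbound b) hlenb hcodeb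
      rw [e1, e2] at hlex
      have hlena : (digits a').length = (digits a).length := by
        rw [hdiglen, hdiglen, heqa]
      rcases Stmt11Aux.lex_concat hlena hlex with h | h
      · have : a' = a := hdigeq a' a h
        subst this; omega
      · have h6 : code a' < code a := Stmt11Aux.enc_lt_enc (hdigbound a') (hdigbound a) hlena h
        omega
    · -- mixed: impossible by depths
      have l1 : d b = d a + 1 := by
        rw [hd]; simp only [hk, SimpleGraph.Walk.length_concat]
      have l2 : d a' = d b' + 1 := by
        rw [hd]; simp only [hk', SimpleGraph.Walk.length_concat]
      omega
    · have l1 : d a = d b + 1 := by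
        rw [hd]; simp only [hk, SimpleGraph.Walk.length_concat]
      have l2 : d b' = d a' + 1 := by
        rw [hd]; simp only [hk', SimpleGraph.Walk.length_concat]
      omega
    · -- a, a' are children of b, b'
      have e1 : digits a = digits b ++ [g a] := hdigconcat b a hab.symm hk
      have e2 : digits a' = digits b' ++ [g a'] := hdigconcat b' a' ha'b'.symm hk'
      have hlena : (digits a).length = (digits a').length := by
        rw [hdiglen, hdiglen, heqa]
      have hlex : List.Lex (· < ·) (digits a) (digits a') :=
        Stmt11Aux.lex_of_enc_lt (hdigbound a) (hdigbound a') hlena hcodea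
      rw [e1, e2] at hlex
      have hlenb : (digits b).length = (digits b').length := by
        rw [hdiglen, hdiglen, heqb]
      rcases Stmt11Aux.lex_concat hlenb hlex with h | h
      · have : b = b' := hdigeq b b' h
        subst this; omega
      · have h6 : code b < code b' := Stmt11Aux.enc_lt_enc (hdigbound b) (hdigbound b') hlenb h
        omega
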